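/- Let B and C be d×d integer matrices, let x, y ∈ ℤ^d, and define γ_k = xᵀ B^k C y for k ∈ ℕ. Let p be a prime and m ∈ ℕ. If p^m divides γ_i for every i ∈ {0, …, d−1}, then p^m divides γ_k for every k ∈ ℕ. -/

import Mathlib

open Matrix

private lemma dot_sum_mulVec {d : ℕ} (x y : Fin d → ℤ) (s : Finset ℕ)
    (M : ℕ → Matrix (Fin d) (Fin d) ℤ) :
    x ⬝ᵥ (∑ i ∈ s, M i) *ᵥ y = ∑ i ∈ s, x ⬝ᵥ (M i) *ᵥ y := by
  induction s using Finset.induction with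
  | empty => simp
  | insert _ _ h ih =>
    rw [Finset.sum_insert h, Finset.sum_insert h, Matrix.add_mulVec, dotProduct_add, ih]

/-- Let `B, C` be `d × d` integer matrices, `x, y ∈ ℤ^d` and
`γ k = xᵀ B^k C y`. If `p` is a prime, `m ∈ ℕ`, and `p^m` divides `γ i` for every
`i ∈ {0, …, d−1}`, then `p^m` divides `γ k` for every `k ∈ ℕ`. -/
theorem pow_p_dvd_of_dvd_first_d (p d m : ℕ) (hp : p.Prime)
    (B C : Matrix (Fin d) (Fin d) ℤ) (x y : Fin d → ℤ) (γ : ℕ → ℤ)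
    (hγ : ∀ k, γ k = x ⬝ᵥ (B ^ k * C) *ᵥ y)
    (hdvd : ∀ i < d, (p : ℤ) ^ m ∣ γ i) :
    ∀ k, (p : ℤ) ^ m ∣ γ k := by
  intro k
  rcases Nat.eq_zero_or_pos d with hd | hd
  · subst hd
    have : γ k = 0 := by rw [hγ k]; simp [dotProduct]
    simp [this]
  haveI : Nonempty (Fin d) := ⟨⟨0, hd⟩⟩
  set q : Polynomial ℤ := Polynomial.X ^ k %ₘ B.charpoly with hq
  have hnd : B.charpoly.natDegree = d := by
    simp [Matrix.charpoly_natDegree_eq_dim B]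
  have hne1 : B.charpoly ≠ 1 := by
    intro h
    rw [h, Polynomial.natDegree_one] at hnd
    omega
  have hdeg : q.natDegree < d := by
    have := Polynomial.natDegree_modByMonic_lt (Polynomial.X ^ k)
      (Matrix.charpoly_monic B) hne1
    rwa [hnd] at this
  have hBk : B ^ k = ∑ i ∈ Finset.range d, q.coeff i • B ^ i := by
    rw [Matrix.pow_eq_aeval_mod_charpoly, ← hq, Polynomial.aeval_eq_sum_range' hdeg]
  have hγk : γ k = ∑ i ∈ Finset.range d, q.coeff i * γ i := by
    rw [hγ k, hBk, Finset.sum_mul]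
    simp only [smul_mul_assoc]
    rw [dot_sum_mulVec]
    refine Finset.sum_congr rfl fun i hi => ?_
    rw [hγ i, Matrix.smul_mulVec, dotProduct_smul, smul_eq_mul]
  rw [hγk]
  exact Finset.dvd_sum fun i hi => Dvd.dvd.mul_left (hdvd i (Finset.mem_range.mp hi)) _
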